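/- (Claim 4, forward direction, labeling part 3) Let P be a popular matching leaving exactly U uncovered, with D, V' as above. For every v' ∈ V' ∖ (D ∪ U) and x ∈ V ∖ V' such that v' prefers x to P(v'), the edge (v',x) is labeled (+,−) with respect to P, with the + at v'; in particular (v',x) does not block P. -/

import Mathlib

/-- A roommates instance: a simple graph together with, for each vertex,
a ranking of vertices (lower rank = more preferred), injective on neighbors. -/
structure Roommates (V : Type*) where
  G : SimpleGraph V
  rank : V → V → ℕ
  rank_inj : ∀ u a b, G.Adj u a → G.Adj u b → rank u a = rank u b → a = b

variable {V : Type*}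

/-- `M` encodes a matching: `M u = some v` means `u` is matched to `v`. -/
def IsMatching (R : Roommates V) (M : V → Option V) : Prop :=
  ∀ u v, M u = some v → R.G.Adj u v ∧ M v = some u

/-- Vertex `v` prefers matching `M` to matching `M'`. -/
def Prefers (R : Roommates V) (M M' : V → Option V) (v : V) : Prop :=
  (∃ w, M v = some w ∧ M' v = none) ∨
  (∃ w w', M v = some w ∧ M' v = some w' ∧ R.rank v w < R.rank v w')

/-- `M` is popular: it never loses a head-to-head election. -/
def Popular [Fintype V] (R : Roommates V) (M : V → Option V) : Prop :=
  ∀ M', IsMatching R M' →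
    {v | Prefers R M' M v}.ncard ≤ {v | Prefers R M M' v}.ncard

/-- Edge `(u,v)` blocks `M`: each endpoint is unmatched or prefers the other
endpoint to its partner. -/
def Blocks (R : Roommates V) (M : V → Option V) (u v : V) : Prop :=
  R.G.Adj u v ∧ M u ≠ some v ∧
  (∀ w, M u = some w → R.rank u v < R.rank u w) ∧
  (∀ w, M v = some w → R.rank v u < R.rank v w)

def IsStable (R : Roommates V) (M : V → Option V) : Prop :=
  ∀ u v, ¬ Blocks R M u v

/-- `u` votes `+` for `v` against its situation in `M`
(true when `u` is unmatched or prefers `v` to its `M`-partner). -/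
def VotePlus (R : Roommates V) (M : V → Option V) (u v : V) : Prop :=
  ∀ w, M u = some w → R.rank u v < R.rank u w

/-- Non-matching edge of `G_M`, i.e. not labeled `(−,−)`. -/
def NonMatchEdge (R : Roommates V) (M : V → Option V) (u v : V) : Prop :=
  R.G.Adj u v ∧ M u ≠ some v ∧ (VotePlus R M u v ∨ VotePlus R M v u)

/-- `AltList A M b l`: the list of vertices `l` forms an alternating sequence,
whose first edge is a matching edge if `b = true` and an allowed (`A`)
non-matching edge if `b = false`. -/
def AltList (A : V → V → Prop) (M : V → Option V) : Bool → List V → Prop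
  | _, [] => True
  | _, [_] => True
  | true, u :: v :: rest => M u = some v ∧ AltList A M false (v :: rest)
  | false, u :: v :: rest => A u v ∧ AltList A M true (v :: rest)

/-- A matching of the subgraph induced on `W`. -/
def IsMatchingOn (R : Roommates V) (W : Set V) (M : V → Option V) : Prop :=
  IsMatching R M ∧ ∀ u v, M u = some v → u ∈ W ∧ v ∈ W

/-- Popularity within the subgraph induced on `W`. -/
def PopularOn (R : Roommates V) (W : Set V) (M : V → Option V) : Prop :=
  ∀ M', IsMatchingOn R W M' →
    {v | v ∈ W ∧ Prefers R M' M v}.ncard ≤ {v | v ∈ W ∧ Prefers R M M' v}.ncard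

/-- Stability within the subgraph induced on `W`. -/
def StableOn (R : Roommates V) (W : Set V) (M : V → Option V) : Prop :=
  ∀ u v, u ∈ W → v ∈ W → ¬ Blocks R M u v

/-- Claim 4, forward direction, labeling part 3: for every
`v' ∈ V' ∖ (D ∪ U)` and `x ∈ V ∖ V'` such that `v'` prefers `x` to its
`P`-partner, the edge `(v', x)` is labeled `(+,−)` with the `+` at `v'`;
in particular it does not block `P`. -/
theorem claim4_label3 {V : Type*} [Fintype V] (R : Roommates V)
    (P : V → Option V) (hP : IsMatching R P) (hpop : Popular R P)
    (U : Set V) (hU : ∀ v, P v = none ↔ v ∈ U)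
    (Z : Set V) (hZ : Z = {w | w ∉ U ∧ ∀ x ∈ U, ¬ R.G.Adj w x})
    (PZ : V → Option V) (hPZ : IsMatching R PZ)
    (hsub : ∀ u v, PZ u = some v → P u = some v)
    (hcov : ∀ z ∈ Z, ∃ y, PZ z = some y)
    (hmeet : ∀ u v, PZ u = some v → u ∈ Z ∨ v ∈ Z)
    (V' : Set V) (hV' : V' = Z ∪ {y | ∃ z ∈ Z, PZ z = some y} ∪ U)
    (D : Set V)
    (hD : D = {z | ∃ (l : List V) (x y : V) (t : List V),
      l = x :: y :: t ∧ x ∈ V' ∧ y ∈ V' ∧ Blocks R PZ x y ∧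
      AltList (fun a b => a ∈ V' ∧ b ∈ V' ∧ NonMatchEdge R PZ a b) PZ false l ∧
      l.Nodup ∧ Odd l.length ∧ l.getLast? = some z}) :
    ∀ v', v' ∈ V' → v' ∉ D → v' ∉ U → ∀ x, x ∉ V' → R.G.Adj v' x →
      (∃ w, P v' = some w ∧ R.rank v' x < R.rank v' w) →
      (∃ w, P x = some w ∧ R.rank x w < R.rank x v') ∧ ¬ Blocks R P v' x := by
  classical
  intro v' hv'V hv'D hv'U x hxV' hadj hpr
  obtain ⟨p, hPv', hpref⟩ := hpr
  have hxU : x ∉ U := fun h => hxV' (by rw [hV']; exact Or.inr h)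
  obtain ⟨w, hPxw⟩ : ∃ w, P x = some w := by
    cases h : P x with
    | none => exact absurd ((hU x).mp h) hxU
    | some w => exact ⟨w, rfl⟩
  have hAxw : R.G.Adj x w := (hP x w hPxw).1
  have hPwx : P w = some x := (hP x w hPxw).2
  have hAv'p : R.G.Adj v' p := (hP v' p hPv').1
  have hPpv' : P p = some v' := (hP v' p hPv').2
  have hxv' : x ≠ v' := hadj.ne'
  have hwv' : w ≠ v' := by
    intro h
    subst h
    rw [hPwx] at hPv'
    injection hPv' with h2
    subst h2
    exact lt_irrefl _ hpref
  have hxp : x ≠ p := by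
    intro h
    subst h
    exact lt_irrefl _ hpref
  have key : R.rank x w < R.rank x v' := by
    by_contra hk
    rcases eq_or_lt_of_le (not_lt.mp hk) with heq | hlt
    · exact hwv' (R.rank_inj x w v' hAxw hadj.symm heq.symm)
    -- hlt : rank x v' < rank x w ; derive a popularity contradiction
    · have hwZ : w ∉ Z := by
        intro hwZ
        obtain ⟨y, hy⟩ := hcov w hwZ
        have h1 := hsub w y hy
        rw [hPwx] at h1
        injection h1 with h1
        apply hxV'
        rw [hV']
        exact Or.inl (Or.inr ⟨w, hwZ, h1 ▸ hy⟩)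
      have hwU : w ∉ U := by
        intro h
        have := (hU w).mpr h
        rw [this] at hPwx
        exact nomatch hPwx
      obtain ⟨u, huU, hAwu⟩ : ∃ u ∈ U, R.G.Adj w u := by
        rw [hZ] at hwZ
        simp only [Set.mem_setOf_eq, not_and, not_forall] at hwZ
        obtain ⟨u, hu, hA⟩ := hwZ hwU
        exact ⟨u, hu, not_not.mp hA⟩
      have hPu : P u = none := (hU u).mpr huU
      have hne : ∀ a b, P a = some b → u ≠ a := by
        intro a b hab h
        subst h
        rw [hPu] at hab
        exact nomatch hab
      have huw : u ≠ w := hne w x hPwx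
      have hux : u ≠ x := hne x w hPxw
      have huv' : u ≠ v' := hne v' p hPv'
      have hup : u ≠ p := hne p v' hPpv'
      have hwx : w ≠ x := hAxw.ne'
      have hwp : w ≠ p := by
        intro h
        subst h
        rw [hPpv'] at hPwx
        exact hxv' (Option.some_inj.mp hPwx).symm
      have hv'p : v' ≠ p := hAv'p.ne
      set M' : V → Option V := fun a =>
        if a = u then some w else if a = w then some u else
        if a = x then some v' else if a = v' then some x else
        if a = p then none else P a with hM'def
      have hM'u : M' u = some w := by simp [hM'def]
      have hM'w : M' w = some u := by simp [hM'def, huw.symm]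
      have hxu : x ≠ u := hux.symm
      have hxw : x ≠ w := hwx.symm
      have hv'u : v' ≠ u := huv'.symm
      have hv'w : v' ≠ w := hwv'.symm
      have hv'x : v' ≠ x := hxv'.symm
      have hpu : p ≠ u := hup.symm
      have hpw : p ≠ w := hwp.symm
      have hpx : p ≠ x := hxp.symm
      have hpv' : p ≠ v' := hv'p.symm
      have hM'x : M' x = some v' := by simp [hM'def, hxu, hxw]
      have hM'v' : M' v' = some x := by simp [hM'def, hv'u, hv'w, hv'x]
      have hM'p : M' p = none := by simp [hM'def, hpu, hpw, hpx, hpv']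
      have hM'other : ∀ a, a ≠ u → a ≠ w → a ≠ x → a ≠ v' → a ≠ p → M' a = P a := by
        intro a h1 h2 h3 h4 h5
        simp [hM'def, h1, h2, h3, h4, h5]
      have hM' : IsMatching R M' := by
        intro a b hab
        by_cases h1 : a = u
        · subst h1
          rw [hM'u] at hab
          injection hab with hab
          subst hab
          exact ⟨hAwu.symm, hM'w⟩
        by_cases h2 : a = w
        · subst h2
          rw [hM'w] at hab
          injection hab with hab
          subst hab
          exact ⟨hAwu, hM'u⟩
        by_cases h3 : a = x
        · subst h3
          rw [hM'x] at hab
          injection hab with hab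
          subst hab
          exact ⟨hadj.symm, hM'v'⟩
        by_cases h4 : a = v'
        · subst h4
          rw [hM'v'] at hab
          injection hab with hab
          subst hab
          exact ⟨hadj, hM'x⟩
        by_cases h5 : a = p
        · subst h5
          rw [hM'p] at hab
          exact nomatch hab
        · rw [hM'other a h1 h2 h3 h4 h5] at hab
          obtain ⟨hA, hba⟩ := hP a b hab
          refine ⟨hA, ?_⟩
          have hbu : b ≠ u := fun h => by
            subst h; rw [hPu] at hba; exact nomatch hba
          have hbw : b ≠ w := fun h => by
            subst h; rw [hPwx] at hba; exact h3 (Option.some_inj.mp hba).symm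
          have hbx : b ≠ x := fun h => by
            subst h; rw [hPxw] at hba; exact h2 (Option.some_inj.mp hba).symm
          have hbv' : b ≠ v' := fun h => by
            subst h; rw [hPv'] at hba; exact h5 (Option.some_inj.mp hba).symm
          have hbp : b ≠ p := fun h => by
            subst h; rw [hPpv'] at hba; exact h4 (Option.some_inj.mp hba).symm
          rw [hM'other b hbu hbw hbx hbv' hbp]
          exact hba
      have hpp := hpop M' hM'
      have hsub1 : ({u, x, v'} : Set V) ⊆ {v | Prefers R M' P v} := by
        intro a ha
        rcases ha with h | h | h
        · subst h; exact Or.inl ⟨w, hM'u, hPu⟩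
        · subst h; exact Or.inr ⟨v', w, hM'x, hPxw, hlt⟩
        · subst h; exact Or.inr ⟨x, p, hM'v', hPv', hpref⟩
      have hsub2 : {v | Prefers R P M' v} ⊆ ({w, p} : Set V) := by
        intro a ha
        by_contra han
        simp only [Set.mem_insert_iff, Set.mem_singleton_iff, not_or] at han
        obtain ⟨haw, hap⟩ := han
        by_cases h1 : a = u
        · subst h1
          rcases ha with ⟨c, hc, -⟩ | ⟨c, d, hc, -, -⟩ <;>
            (rw [hPu] at hc; exact nomatch hc)
        by_cases h3 : a = x
        · subst h3
          rcases ha with ⟨c, -, hc⟩ | ⟨c, d, hc, hd, hr⟩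
          · rw [hM'x] at hc; exact nomatch hc
          · rw [hPxw] at hc; rw [hM'x] at hd
            rw [Option.some_inj.mp hc.symm, Option.some_inj.mp hd.symm] at hr
            exact lt_asymm hlt hr
        by_cases h4 : a = v'
        · subst h4
          rcases ha with ⟨c, -, hc⟩ | ⟨c, d, hc, hd, hr⟩
          · rw [hM'v'] at hc; exact nomatch hc
          · rw [hPv'] at hc; rw [hM'v'] at hd
            rw [Option.some_inj.mp hc.symm, Option.some_inj.mp hd.symm] at hr
            exact lt_asymm hpref hr
        · rcases ha with ⟨c, hc, hc'⟩ | ⟨c, d, hc, hd, hr⟩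
          · rw [hM'other a h1 haw h3 h4 hap, hc] at hc'
            exact nomatch hc'
          · rw [hM'other a h1 haw h3 h4 hap, hc] at hd
            rw [Option.some_inj.mp hd] at hr
            exact lt_irrefl _ hr
      have h3c : ({u, x, v'} : Set V).ncard = 3 := by
        rw [Set.ncard_insert_of_notMem (by simp [hux, huv']),
          Set.ncard_insert_of_notMem (by simp [hxv']), Set.ncard_singleton]
      have hle1 : 3 ≤ {v | Prefers R M' P v}.ncard :=
        h3c ▸ Set.ncard_le_ncard hsub1 (Set.toFinite _)
      have hle2 : {v | Prefers R P M' v}.ncard ≤ 2 := by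
        refine le_trans (Set.ncard_le_ncard hsub2 (Set.toFinite _)) ?_
        refine le_trans (Set.ncard_insert_le w {p}) ?_
        simp
      omega
  refine ⟨⟨w, hPxw, key⟩, ?_⟩
  rintro ⟨-, -, -, hbl⟩
  exact lt_asymm key (hbl w hPxw)
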